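/- Let n be a positive integer, let (X_1, …, X_n) be a random vector in ℝ^n with an arbitrary joint distribution, and let Y_1, …, Y_n be independent real random variables. Fix t ∈ ℝ and suppose that P[Y_i ≥ t] = P[X_i ≥ t] for every i ∈ [n]. Then P[max_{i∈[n]} Y_i ≥ t] ≥ (1 − 1/e) · P[max_{i∈[n]} X_i ≥ t]. -/

import Mathlib

open MeasureTheory ProbabilityTheory

/-- If `Y 1, …, Y n` are independent and, for a fixed threshold `t`, each `Y i` matches the
tail probability of `X i` at `t`, then
`P[max_i Y_i ≥ t] ≥ (1 - 1/e) P[max_i X_i ≥ t]`, with no independence assumed on the `X i`. -/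
theorem independent_max_tail_lower_bound
    (n : ℕ) (hn : 0 < n)
    (Ω : Type) [MeasurableSpace Ω] (P : Measure Ω) [IsProbabilityMeasure P]
    (Ω' : Type) [MeasurableSpace Ω'] (P' : Measure Ω') [IsProbabilityMeasure P']
    (X : Fin n → Ω → ℝ) (hmX : ∀ i, Measurable (X i))
    (Y : Fin n → Ω' → ℝ) (hmY : ∀ i, Measurable (Y i))
    (hindep : iIndepFun Y P')
    (t : ℝ)
    (htail : ∀ i, P' {ω | t ≤ Y i ω} = P {ω | t ≤ X i ω}) :
    (1 - (Real.exp 1)⁻¹) * (P {ω | t ≤ ⨆ i, X i ω}).toReal ≤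
      (P' {ω | t ≤ ⨆ i, Y i ω}).toReal := by
  have hne : Nonempty (Fin n) := Fin.pos_iff_nonempty.mp hn
  have key : ∀ {α : Type} (f : Fin n → α → ℝ) (ω : α),
      (t ≤ ⨆ i, f i ω) ↔ ∃ i, t ≤ f i ω := by
    intro α f ω
    constructor
    · intro h
      obtain ⟨i, hi⟩ := Finite.exists_max (fun i => f i ω)
      exact ⟨i, h.trans (ciSup_le hi)⟩
    · rintro ⟨i, hi⟩
      exact hi.trans (le_ciSup (f := fun j => f j ω) (Set.Finite.bddAbove (Set.finite_range _)) i)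
  have hXset : {ω | t ≤ ⨆ i, X i ω} = ⋃ i, {ω | t ≤ X i ω} := by
    ext ω; simp [key, Set.mem_iUnion]
  have hYset : {ω | t ≤ ⨆ i, Y i ω} = ⋃ i, {ω | t ≤ Y i ω} := by
    ext ω; simp [key, Set.mem_iUnion]
  set p : Fin n → ℝ := fun i => (P' {ω | t ≤ Y i ω}).toReal with hp
  have hp0 : ∀ i, 0 ≤ p i := fun i => ENNReal.toReal_nonneg
  have hp1 : ∀ i, p i ≤ 1 := by
    intro i
    have := prob_le_one (μ := P') (s := {ω | t ≤ Y i ω})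
    simpa using ENNReal.toReal_mono ENNReal.one_ne_top this
  set m : ℝ := (P {ω | t ≤ ⨆ i, X i ω}).toReal with hm
  have hm1 : m ≤ 1 := by
    have := prob_le_one (μ := P) (s := {ω | t ≤ ⨆ i, X i ω})
    simpa using ENNReal.toReal_mono ENNReal.one_ne_top this
  have hm0 : 0 ≤ m := ENNReal.toReal_nonneg
  set S : ℝ := ∑ i, p i with hS
  have hmS : m ≤ S := by
    have h1 : P {ω | t ≤ ⨆ i, X i ω} ≤ ∑ i, P {ω | t ≤ X i ω} := by
      rw [hXset]; exact measure_iUnion_fintype_le _ _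
    have h2 : ((∑ i, P {ω | t ≤ X i ω}).toReal : ℝ) = S := by
      rw [ENNReal.toReal_sum (fun i _ => measure_ne_top _ _)]
      exact Finset.sum_congr rfl fun i _ => by rw [hp, ← htail i]
    calc m ≤ (∑ i, P {ω | t ≤ X i ω}).toReal :=
          ENNReal.toReal_mono (by simp [ENNReal.sum_lt_top.mpr
            (fun i _ => measure_lt_top _ _) |>.ne]) h1
      _ = S := h2
  -- independence computation
  have hmeasB : ∀ i, MeasurableSet {ω | t ≤ Y i ω} := fun i =>
    (hmY i) measurableSet_Ici
  have hcompl : {ω | t ≤ ⨆ i, Y i ω}ᶜ = ⋂ i, {ω | t ≤ Y i ω}ᶜ := by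
    rw [hYset, Set.compl_iUnion]
  have hprod : P' ({ω | t ≤ ⨆ i, Y i ω}ᶜ) = ∏ i, P' ({ω | t ≤ Y i ω}ᶜ) := by
    rw [hcompl]
    exact hindep.meas_iInter fun i =>
      ⟨Set.Iio t, measurableSet_Iio, by ext ω; simp [not_le]⟩
  have hYmeas : MeasurableSet {ω | t ≤ ⨆ i, Y i ω} := by
    rw [hYset]; exact MeasurableSet.iUnion fun i => hmeasB i
  have hci : ∀ i, (P' ({ω | t ≤ Y i ω}ᶜ)).toReal = 1 - p i := by
    intro i
    rw [prob_compl_eq_one_sub (hmeasB i)]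
    rw [ENNReal.toReal_sub_of_le (prob_le_one) ENNReal.one_ne_top]
    simp [hp]
  have hmain : (P' {ω | t ≤ ⨆ i, Y i ω}).toReal = 1 - ∏ i, (1 - p i) := by
    have := prob_compl_eq_one_sub (μ := P') hYmeas
    have h2 : (P' ({ω | t ≤ ⨆ i, Y i ω}ᶜ)).toReal = ∏ i, (1 - p i) := by
      rw [hprod, ENNReal.toReal_prod]
      exact Finset.prod_congr rfl fun i _ => hci i
    have h3 : (P' ({ω | t ≤ ⨆ i, Y i ω}ᶜ)).toReal
        = 1 - (P' {ω | t ≤ ⨆ i, Y i ω}).toReal := by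
      rw [this, ENNReal.toReal_sub_of_le prob_le_one ENNReal.one_ne_top]
      simp
    have hle : (P' {ω | t ≤ ⨆ i, Y i ω}).toReal ≤ 1 := by
      have := prob_le_one (μ := P') (s := {ω | t ≤ ⨆ i, Y i ω})
      simpa using ENNReal.toReal_mono ENNReal.one_ne_top this
    linarith [h2.symm.trans h3]
  rw [hmain]
  -- product bound by exp
  have hprodexp : ∏ i, (1 - p i) ≤ Real.exp (-S) := by
    have : ∏ i, (1 - p i) ≤ ∏ i, Real.exp (-(p i)) := by
      apply Finset.prod_le_prod
      · intro i _; linarith [hp1 i]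
      · intro i _; linarith [Real.add_one_le_exp (-(p i))]
    calc ∏ i, (1 - p i) ≤ ∏ i, Real.exp (-(p i)) := this
      _ = Real.exp (∑ i, -(p i)) := (Real.exp_sum _ _).symm
      _ = Real.exp (-S) := by rw [← Finset.sum_neg_distrib]
  have hepos : (0:ℝ) < 1 - (Real.exp 1)⁻¹ := by
    have : (Real.exp 1)⁻¹ < 1 := by
      rw [inv_lt_one_iff₀]; right
      exact lt_trans one_lt_two (by nlinarith [Real.exp_one_gt_d9])
    linarith
  rcases le_or_gt 1 S with hS1 | hS1
  · have : Real.exp (-S) ≤ (Real.exp 1)⁻¹ := by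
      rw [← Real.exp_neg]
      exact Real.exp_le_exp.mpr (by linarith)
    nlinarith
  · have hconv : Real.exp (-S) ≤ (1 - S) * 1 + S * (Real.exp 1)⁻¹ := by
      have hS0 : 0 ≤ S := Finset.sum_nonneg fun i _ => hp0 i
      have := convexOn_exp.2 (Set.mem_univ (0:ℝ)) (Set.mem_univ (-1:ℝ))
        (by linarith : (0:ℝ) ≤ 1 - S) hS0 (by ring)
      simpa [Real.exp_neg, smul_eq_mul, mul_comm] using this
    nlinarith
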